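/- arXiv:1606.07883 — 3 statements merged into one kernel-verified Lean document; each statement's English description precedes it below -/
import Mathlib

section
/- For every integer n ≥ 3, S(n, n−3) = C(n,4) · C(n−2,2), a product of two binomial coefficients. -/
open Finset Complex

/-- Stirling numbers of the second kind. -/
def S : ℕ → ℕ → ℕ
  | 0, 0 => 1
  | 0, _ + 1 => 0
  | _ + 1, 0 => 0
  | n + 1, k + 1 => (k + 1) * S n (k + 1) + S n k

/-- The Touchard (exponential) polynomial. -/
noncomputable def T (n : ℕ) (z : ℂ) : ℂ := ∑ k ∈ Finset.range (n + 1), (S n k : ℂ) * z ^ k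

lemma S_zero_of_lt : ∀ n k : ℕ, n < k → S n k = 0 := by
  intro n
  induction n with
  | zero =>
    intro k hk
    cases k with
    | zero => omega
    | succ j => rfl
  | succ n ih =>
    intro k hk
    cases k with
    | zero => omega
    | succ j =>
      show (j + 1) * S n (j + 1) + S n j = 0
      rw [ih (j+1) (by omega), ih j (by omega)]; ring

lemma S_diag : ∀ n, S n n = 1 := by
  intro n
  induction n with
  | zero => rfl
  | succ n ih =>
    show (n + 1) * S n (n + 1) + S n n = 1
    rw [S_zero_of_lt n (n+1) (by omega), ih]; ring

lemma S_sub_one (m : ℕ) : 2 * S (m + 1) m = (m + 1) * m := by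
  induction m with
  | zero => rfl
  | succ m ih =>
    show 2 * ((m + 1) * S (m + 1) (m + 1) + S (m + 1) m) = (m + 2) * (m + 1)
    rw [S_diag]
    zify at ih ⊢
    linear_combination ih

lemma S_sub_two (m : ℕ) :
    24 * S (m + 3) (m + 1) = 4 * (m + 3) * (m + 2) * (m + 1) + 3 * (m + 3) * (m + 2) * (m + 1) * m := by
  induction m with
  | zero => rfl
  | succ m ih =>
    show 24 * ((m + 2) * S (m + 3) (m + 2) + S (m + 3) (m + 1)) = _
    have h1 := S_sub_one (m + 2)
    zify at ih h1 ⊢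
    linear_combination ih + (12 * ((m : ℤ) + 2)) * h1

lemma S_sub_three (m : ℕ) :
    48 * S (m + 3) m = (m + 3) * (m + 2) * (m + 1) * (m + 1) * m * m := by
  induction m with
  | zero => rfl
  | succ m ih =>
    show 48 * ((m + 1) * S (m + 3) (m + 1) + S (m + 3) m) = _
    have h2 := S_sub_two m
    zify at ih h2 ⊢
    linear_combination ih + (2 * ((m : ℤ) + 1)) * h2

theorem stirling_n_sub_three (n : ℕ) (hn : 3 ≤ n) :
    S n (n - 3) = n.choose 4 * (n - 2).choose 2 := by
  obtain ⟨m, rfl⟩ : ∃ m, n = m + 3 := ⟨n - 3, by omega⟩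
  have key := S_sub_three m
  have hd4 : (m + 3).descFactorial 4 = 24 * (m + 3).choose 4 := by
    rw [Nat.descFactorial_eq_factorial_mul_choose]; rfl
  have hd2 : (m + 1).descFactorial 2 = 2 * (m + 1).choose 2 := by
    rw [Nat.descFactorial_eq_factorial_mul_choose]; rfl
  have hd4' : (m + 3).descFactorial 4 = (m + 3) * (m + 2) * (m + 1) * m := by
    simp [Nat.descFactorial]; ring
  have hd2' : (m + 1).descFactorial 2 = (m + 1) * m := by
    simp [Nat.descFactorial]; ring
  have hsub : m + 3 - 3 = m := by omega
  have hsub2 : m + 3 - 2 = m + 1 := by omega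
  rw [hsub, hsub2]
  have : 48 * S (m + 3) m = 48 * ((m + 3).choose 4 * (m + 1).choose 2) := by
    rw [key]
    have := hd4'.symm.trans hd4
    have := hd2'.symm.trans hd2
    nlinarith [hd4'.symm.trans hd4, hd2'.symm.trans hd2]
  omega
end

section
/- Let ψ(t) = e^{t+iθ}/μ − log t with saddle point t₀ satisfying t₀ e^{t₀} = μ e^{−iθ}, and define Ψ_r = ψ^{(r)}(t₀)/ψ''(t₀). Then the steepest-descent coefficient c₂ = −(5Ψ₃² − 3Ψ₄)/(12 ψ''(t₀)) equals −P₂(t₀)/(12(1+t₀)³), where P₂(t) = 2t⁴ − 3t³ − 20t² − 18t + 2. -/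
open Finset Complex

private lemma deriv_on_slit {f g g' : ℂ → ℂ}
    (hfg : ∀ s ∈ Complex.slitPlane, f s = g s)
    (hg : ∀ s ∈ Complex.slitPlane, HasDerivAt g (g' s) s) :
    ∀ s ∈ Complex.slitPlane, deriv f s = g' s := by
  intro s hs
  have hev : f =ᶠ[nhds s] g :=
    Filter.eventuallyEq_of_mem (Complex.isOpen_slitPlane.mem_nhds hs) hfg
  rw [hev.deriv_eq]
  exact (hg s hs).deriv

theorem steepest_descent_c2 (μ θ : ℝ) (hμ : 0 < μ) (t₀ : ℂ)
    (ht : t₀ ∈ Complex.slitPlane) (ht0 : t₀ ≠ 0) (htm1 : t₀ ≠ -1)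
    (hsaddle : t₀ * Complex.exp t₀ = μ * Complex.exp (-θ * Complex.I))
    (ψ : ℂ → ℂ) (hψ : ψ = fun s => Complex.exp (s + θ * Complex.I) / μ - Complex.log s)
    (Ψ : ℕ → ℂ) (hΨ : ∀ r : ℕ, Ψ r = iteratedDeriv r ψ t₀ / iteratedDeriv 2 ψ t₀) :
    -(5 * (Ψ 3) ^ 2 - 3 * Ψ 4) / (12 * iteratedDeriv 2 ψ t₀) =
      -(2 * t₀ ^ 4 - 3 * t₀ ^ 3 - 20 * t₀ ^ 2 - 18 * t₀ + 2) / (12 * (1 + t₀) ^ 3) := by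
  have hμ0 : (μ : ℂ) ≠ 0 := Complex.ofReal_ne_zero.mpr hμ.ne'
  set E : ℂ → ℂ := fun s => Complex.exp (s + θ * Complex.I) / μ with hE
  have hEderiv : ∀ s : ℂ, HasDerivAt E (E s) s := by
    intro s
    have h1 : HasDerivAt (fun s : ℂ => s + θ * Complex.I) 1 s :=
      (hasDerivAt_id s).add_const _
    have h2 := h1.cexp
    simpa using h2.div_const μ
  set g1 : ℂ → ℂ := fun s => E s - s⁻¹ with hg1
  set g2 : ℂ → ℂ := fun s => E s + (s ^ 2)⁻¹ with hg2
  set g3 : ℂ → ℂ := fun s => E s - 2 * (s ^ 3)⁻¹ with hg3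
  set g4 : ℂ → ℂ := fun s => E s + 6 * (s ^ 4)⁻¹ with hg4
  have hd1 : ∀ s ∈ Complex.slitPlane, HasDerivAt ψ (g1 s) s := by
    intro s hs
    rw [hψ]
    exact (hEderiv s).sub (Complex.hasDerivAt_log hs)
  have hd2 : ∀ s ∈ Complex.slitPlane, HasDerivAt g1 (g2 s) s := by
    intro s hs
    have hs0 : s ≠ 0 := Complex.slitPlane_ne_zero hs
    have h := (hEderiv s).sub (hasDerivAt_inv hs0)
    refine h.congr_deriv ?_
    simp only [hg2]
    ring
  have hd3 : ∀ s ∈ Complex.slitPlane, HasDerivAt g2 (g3 s) s := by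
    intro s hs
    have hs0 : s ≠ 0 := Complex.slitPlane_ne_zero hs
    have hp : HasDerivAt (fun s : ℂ => (s ^ 2)⁻¹) (-(↑2 * s ^ 1) / (s ^ 2) ^ 2) s :=
      (hasDerivAt_pow 2 s).inv (pow_ne_zero 2 hs0)
    have h := (hEderiv s).add hp
    refine h.congr_deriv ?_
    simp only [hg3]
    field_simp
    ring
  have hd4 : ∀ s ∈ Complex.slitPlane, HasDerivAt g3 (g4 s) s := by
    intro s hs
    have hs0 : s ≠ 0 := Complex.slitPlane_ne_zero hs
    have hp : HasDerivAt (fun s : ℂ => 2 * (s ^ 3)⁻¹)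
        (2 * (-(↑3 * s ^ 2) / (s ^ 3) ^ 2)) s :=
      ((hasDerivAt_pow 3 s).inv (pow_ne_zero 3 hs0)).const_mul (2 : ℂ)
    have h := (hEderiv s).sub hp
    refine h.congr_deriv ?_
    simp only [hg4]
    field_simp
    ring
  have e1 : ∀ s ∈ Complex.slitPlane, deriv ψ s = g1 s :=
    fun s hs => (hd1 s hs).deriv
  have e2 : ∀ s ∈ Complex.slitPlane, iteratedDeriv 2 ψ s = g2 s := by
    intro s hs
    rw [show (2 : ℕ) = 1 + 1 from rfl, iteratedDeriv_succ, iteratedDeriv_one]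
    exact deriv_on_slit e1 hd2 s hs
  have e3 : ∀ s ∈ Complex.slitPlane, iteratedDeriv 3 ψ s = g3 s := by
    intro s hs
    rw [iteratedDeriv_succ]
    exact deriv_on_slit e2 hd3 s hs
  have e4 : ∀ s ∈ Complex.slitPlane, iteratedDeriv 4 ψ s = g4 s := by
    intro s hs
    rw [iteratedDeriv_succ]
    exact deriv_on_slit e3 hd4 s hs
  -- saddle point: E t₀ = t₀⁻¹
  have key : t₀ * Complex.exp (t₀ + θ * Complex.I) = μ := by
    have hx : Complex.exp (t₀ + θ * Complex.I)
        = Complex.exp t₀ * Complex.exp (θ * Complex.I) := Complex.exp_add _ _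
    have hz : (-θ : ℂ) * Complex.I + θ * Complex.I = 0 := by ring
    rw [hx, ← mul_assoc, hsaddle, mul_assoc, ← Complex.exp_add, hz,
      Complex.exp_zero, mul_one]
  have hEsaddle : E t₀ = t₀⁻¹ := by
    simp only [hE]
    field_simp
    linear_combination key
  have h1t : (1 : ℂ) + t₀ ≠ 0 := by
    intro h; exact htm1 (by linear_combination h)
  have v2 : iteratedDeriv 2 ψ t₀ = (1 + t₀) / t₀ ^ 2 := by
    rw [e2 t₀ ht]; simp only [hg2]; rw [hEsaddle]; field_simp; ring
  have v3 : iteratedDeriv 3 ψ t₀ = (t₀ ^ 2 - 2) / t₀ ^ 3 := by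
    rw [e3 t₀ ht]; simp only [hg3]; rw [hEsaddle]; field_simp
  have v4 : iteratedDeriv 4 ψ t₀ = (t₀ ^ 3 + 6) / t₀ ^ 4 := by
    rw [e4 t₀ ht]; simp only [hg4]; rw [hEsaddle]; field_simp
  rw [hΨ 3, hΨ 4, v2, v3, v4]
  field_simp [ht0, h1t]
  ring
end

section
/- For μ > 0 and integer k, any solution t of t e^t = μ e^{−iθ} with Im(t) ∈ (2πk − θ − π, 2πk − θ + π) and t in the cut plane satisfies t + log t = log μ + (2πk − θ)i, where log is the principal branch. -/
open Finset Complex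

theorem saddle_log_form (μ θ : ℝ) (hμ : 0 < μ) (k : ℤ) (t : ℂ)
    (ht : t ∈ Complex.slitPlane)
    (heq : t * Complex.exp t = μ * Complex.exp (-θ * Complex.I))
    (him : 2 * Real.pi * k - θ - Real.pi < t.im ∧ t.im < 2 * Real.pi * k - θ + Real.pi) :
    t + Complex.log t = Real.log μ + (2 * Real.pi * k - θ) * Complex.I := by
  have ht0 : t ≠ 0 := Complex.slitPlane_ne_zero ht
  have hexp : Complex.exp (t + Complex.log t)
      = Complex.exp (Real.log μ + (2 * Real.pi * k - θ) * Complex.I) := by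
    rw [Complex.exp_add, Complex.exp_log ht0, mul_comm, heq, Complex.exp_add,
      ← Complex.ofReal_exp, Real.exp_log hμ]
    congr 1
    rw [show ((2 : ℂ) * Real.pi * k - θ) * Complex.I
        = -θ * Complex.I + k * (2 * Real.pi * Complex.I) by push_cast; ring,
      Complex.exp_add, Complex.exp_int_mul_two_pi_mul_I, mul_one]
  obtain ⟨n, hn⟩ := Complex.exp_eq_exp_iff_exists_int.mp hexp
  have him' := congrArg Complex.im hn
  simp only [Complex.add_im, Complex.log_im, Complex.ofReal_im, Complex.mul_im,
    Complex.I_im, Complex.I_re, Complex.sub_im, Complex.ofReal_re, Complex.sub_re,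
    Complex.mul_re, Complex.intCast_im, Complex.intCast_re, Complex.re_ofNat,
    Complex.im_ofNat] at him'
  have hargl : -Real.pi < t.arg := Complex.neg_pi_lt_arg t
  have hargu : t.arg < Real.pi := by
    rw [Complex.mem_slitPlane_iff] at ht
    exact Complex.arg_lt_pi_iff.mpr (ht.imp le_of_lt id)
  have hpi := Real.pi_pos
  have h1 : t.im + t.arg = 2 * Real.pi * k - θ + n * (2 * Real.pi) := by
    linarith [him']
  have hb1 : 2 * Real.pi * k - θ - 2 * Real.pi < t.im + t.arg := by linarith [him.1]
  have hb2 : t.im + t.arg < 2 * Real.pi * k - θ + 2 * Real.pi := by linarith [him.2]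
  have hl : -(2 * Real.pi) < (n : ℝ) * (2 * Real.pi) := by linarith
  have hr : (n : ℝ) * (2 * Real.pi) < 2 * Real.pi := by linarith
  have hnl : (-1 : ℝ) < (n : ℝ) := by nlinarith
  have hnr : (n : ℝ) < 1 := by nlinarith
  have hn0 : n = 0 := by
    have h1' : (-1 : ℤ) < n := by exact_mod_cast hnl
    have h2' : n < (1 : ℤ) := by exact_mod_cast hnr
    omega
  rw [hn0] at hn
  simpa using hn
end
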